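/- Let S : A → A be the K-linear endomorphism determined on the basis ω₁, ω₂, ω₃, ω₄, η₁, η₂, η₃, η₄ by S(ωᵢ) = ωᵢ for i = 1,2,3,4 and S(η₁) = (1/2)(η₁ + ζ⁻¹η₂ + η₃ − ζ⁻¹η₄), S(η₂) = (1/2)(ζ⁻¹η₁ + η₂ − ζ⁻¹η₃ + η₄), S(η₃) = (1/2)(η₁ − ζ⁻¹η₂ + η₃ + ζ⁻¹η₄), S(η₄) = (1/2)(−ζ⁻¹η₁ + η₂ + ζ⁻¹η₃ + η₄). Then S is an antipode for (A, Δ, ε): writing Δ(a) = ∑ a₁ ⊗ a₂, one has ∑ S(a₁)a₂ = ε(a)1 = ∑ a₁S(a₂) for all a ∈ A. -/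
import Mathlib


open MvPolynomial TensorProduct

/-- The defining ideal of the first example: generated by `x⁴ - 1` and
`y² - (1/2)(1 + ζx + x² - ζx³)`. -/
noncomputable def firstRelIdeal (K : Type*) [Field K] (ζ : K) :
    Ideal (MvPolynomial (Fin 2) K) :=
  Ideal.span {X 0 ^ 4 - 1,
    X 1 ^ 2 - C ((2 : K)⁻¹) * (1 + C ζ * X 0 + X 0 ^ 2 - C ζ * X 0 ^ 3)}

/-- The first example: the commutative `K`-algebra generated by commuting elements `x`, `y`
subject to `x⁴ = 1` and `y² = (1/2)(1 + ζx + x² - ζx³)`. -/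
abbrev FirstAlg (K : Type*) [Field K] (ζ : K) : Type _ :=
  MvPolynomial (Fin 2) K ⧸ firstRelIdeal K ζ

/-- The generator `x` of the first example. -/
noncomputable def xF (K : Type*) [Field K] (ζ : K) : FirstAlg K ζ :=
  Ideal.Quotient.mk (firstRelIdeal K ζ) (X 0)

/-- The generator `y` of the first example. -/
noncomputable def yF (K : Type*) [Field K] (ζ : K) : FirstAlg K ζ :=
  Ideal.Quotient.mk (firstRelIdeal K ζ) (X 1)

/-- The group `G = ℤ/2 × ℤ/2`, written multiplicatively. -/
abbrev GG : Type := Multiplicative (ZMod 2 × ZMod 2)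

/-- `g₁ = (0,0)`. -/
def g1 : GG := Multiplicative.ofAdd (0, 0)
/-- `g₂ = (1,0)`. -/
def g2 : GG := Multiplicative.ofAdd (1, 0)
/-- `g₃ = (0,1)`. -/
def g3 : GG := Multiplicative.ofAdd (0, 1)
/-- `g₄ = (1,1)`. -/
def g4 : GG := Multiplicative.ofAdd (1, 1)

/-- The twisted multiplication of `A ⊗̂ A`:
`(a ⊗ b)(a' ⊗ b') = (1/4) ∑_{g,g'} θ(g,g') (a (g.a')) ⊗ ((g'.b) b')`,
extended bilinearly. -/
noncomputable def twMul {K : Type*} [Field K] {B : Type*} [Ring B] [Algebra K B]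
    {G : Type*} [Monoid G] [Fintype G]
    (ρ : G →* (B →ₐ[K] B)) (θ : G → G → K)
    (z w : B ⊗[K] B) : B ⊗[K] B :=
  (4 : K)⁻¹ • ∑ g : G, ∑ g' : G, θ g g' •
    (TensorProduct.map (LinearMap.mul' K B) (LinearMap.mul' K B))
      ((TensorProduct.tensorTensorTensorComm K B B B B)
        ((TensorProduct.map
            (TensorProduct.map LinearMap.id (ρ g').toLinearMap)
            (TensorProduct.map (ρ g).toLinearMap LinearMap.id))
          (z ⊗ₜ[K] w)))

/-- `ω₁ := 1`. -/
noncomputable def w1F (K : Type*) [Field K] (ζ : K) : FirstAlg K ζ := 1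

/-- `ω₂ := (1/2)(1 + ιζ²)x + (1/2)(1 - ιζ²)x³`, where `ι = ξ²`. -/
noncomputable def w2F (K : Type*) [Field K] (ξ ζ : K) : FirstAlg K ζ :=
  ((2 : K)⁻¹ * (1 + ξ ^ 2 * ζ ^ 2)) • xF K ζ +
    ((2 : K)⁻¹ * (1 - ξ ^ 2 * ζ ^ 2)) • (xF K ζ ^ 3)

/-- `ω₃ := (1/2)(1 - ιζ²)x + (1/2)(1 + ιζ²)x³`, where `ι = ξ²`. -/
noncomputable def w3F (K : Type*) [Field K] (ξ ζ : K) : FirstAlg K ζ :=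
  ((2 : K)⁻¹ * (1 - ξ ^ 2 * ζ ^ 2)) • xF K ζ +
    ((2 : K)⁻¹ * (1 + ξ ^ 2 * ζ ^ 2)) • (xF K ζ ^ 3)

/-- `ω₄ := x²`. -/
noncomputable def w4F (K : Type*) [Field K] (ζ : K) : FirstAlg K ζ := xF K ζ ^ 2

/-- `η₁ := y`. -/
noncomputable def e1F (K : Type*) [Field K] (ζ : K) : FirstAlg K ζ := yF K ζ

/-- `η₂ := x³y`. -/
noncomputable def e2F (K : Type*) [Field K] (ζ : K) : FirstAlg K ζ := xF K ζ ^ 3 * yF K ζ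

/-- `η₃ := x²y`. -/
noncomputable def e3F (K : Type*) [Field K] (ζ : K) : FirstAlg K ζ := xF K ζ ^ 2 * yF K ζ

/-- `η₄ := xy`. -/
noncomputable def e4F (K : Type*) [Field K] (ζ : K) : FirstAlg K ζ := xF K ζ * yF K ζ


section AuxLemmas

theorem sum_GG {M : Type*} [AddCommMonoid M] (f : GG → M) :
    ∑ g : GG, f g = f g1 + f g2 + f g3 + f g4 := by
  have : (Finset.univ : Finset GG) = {g1, g2, g3, g4} := by decide
  rw [this, Finset.sum_insert (by decide), Finset.sum_insert (by decide),
    Finset.sum_insert (by decide), Finset.sum_singleton, add_assoc, add_assoc]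

variable {K : Type*} [Field K] {B : Type*} [Ring B] [Algebra K B]
    {G : Type*} [Monoid G] [Fintype G] (ρ : G →* (B →ₐ[K] B)) (θ : G → G → K)

theorem twMul_tmul (a b c d : B) :
    twMul ρ θ (a ⊗ₜ[K] b) (c ⊗ₜ[K] d) =
      (4 : K)⁻¹ • ∑ g : G, ∑ g' : G, θ g g' • (a * ρ g c) ⊗ₜ[K] (ρ g' b * d) := by
  simp [twMul, tensorTensorTensorComm_tmul]

theorem twMul_add_left (z z' w : B ⊗[K] B) :
    twMul ρ θ (z + z') w = twMul ρ θ z w + twMul ρ θ z' w := by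
  simp [twMul, add_tmul, map_add, smul_add, Finset.sum_add_distrib]

theorem twMul_sub_left (z z' w : B ⊗[K] B) :
    twMul ρ θ (z - z') w = twMul ρ θ z w - twMul ρ θ z' w := by
  simp [twMul, sub_tmul, map_sub, smul_sub, Finset.sum_sub_distrib]

theorem twMul_smul_left (k : K) (z w : B ⊗[K] B) :
    twMul ρ θ (k • z) w = k • twMul ρ θ z w := by
  simp only [twMul, map_smul, Finset.smul_sum]
  simp [← smul_tmul', map_smul, smul_comm k]

theorem twMul_add_right (z w w' : B ⊗[K] B) :
    twMul ρ θ z (w + w') = twMul ρ θ z w + twMul ρ θ z w' := by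
  simp [twMul, tmul_add, map_add, smul_add, Finset.sum_add_distrib]

theorem twMul_sub_right (z w w' : B ⊗[K] B) :
    twMul ρ θ z (w - w') = twMul ρ θ z w - twMul ρ θ z w' := by
  simp [twMul, tmul_sub, map_sub, smul_sub, Finset.sum_sub_distrib]

theorem twMul_smul_right (k : K) (z w : B ⊗[K] B) :
    twMul ρ θ z (k • w) = k • twMul ρ θ z w := by
  simp only [twMul, map_smul, Finset.smul_sum]
  simp [tmul_smul, map_smul, smul_comm k]

end AuxLemmas

section Generic

variable {K : Type*} [Field K] {B : Type*} [CommRing B] [Algebra K B]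

private theorem theta_table (ζ : K) (θ : GG → GG → K)
    (hθr : ∀ g h h' : GG, θ g (h * h') = θ g h * θ g h')
    (hθl : ∀ g g' h : GG, θ (g * g') h = θ g h * θ g' h)
    (hθ22 : θ g2 g2 = ζ ^ 2) (hθ23 : θ g2 g3 = -1)
    (hθ32 : θ g3 g2 = -1) (hθ33 : θ g3 g3 = 1) :
    θ g1 g1 = 1 ∧ θ g1 g2 = 1 ∧ θ g1 g3 = 1 ∧ θ g1 g4 = 1 ∧
    θ g2 g1 = 1 ∧ θ g2 g4 = -ζ^2 ∧ θ g3 g1 = 1 ∧ θ g3 g4 = -1 ∧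
    θ g4 g1 = 1 ∧ θ g4 g2 = -ζ^2 ∧ θ g4 g3 = -1 ∧ θ g4 g4 = ζ^2 := by
  have hg4 : (g4 : GG) = g2 * g3 := by decide
  have hg1 : (g1 : GG) = g3 * g3 := by decide
  refine ⟨?_, ?_, ?_, ?_, ?_, ?_, ?_, ?_, ?_, ?_, ?_, ?_⟩
  · simp only [hg1, hθl, hθr, hθ33]; ring
  · simp only [hg1, hθl, hθ32]; ring
  · simp only [hg1, hθl, hθ33]; ring
  · simp only [hg1, hg4, hθl, hθr, hθ32, hθ33]; ring
  · rw [hg1, hθr, hθ23]; ring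
  · rw [hg4, hθr, hθ22, hθ23]; ring
  · rw [hg1, hθr, hθ33]; ring
  · rw [hg4, hθr, hθ32, hθ33]; ring
  · simp only [hg4, hg1, hθl, hθr, hθ23, hθ33]; ring
  · simp only [hg4, hθl, hθ22, hθ32]; ring
  · simp only [hg4, hθl, hθ23, hθ33]; ring
  · simp only [hg4, hθl, hθr, hθ22, hθ23, hθ32, hθ33]; ring

private theorem rho_one (ρ : GG →* (B →ₐ[K] B)) (a : B) : ρ g1 a = a := by
  have hg : (g1 : GG) = 1 := by decide
  rw [hg, map_one]; rfl

private theorem rho_four (ρ : GG →* (B →ₐ[K] B)) (a : B) : ρ g4 a = ρ g2 (ρ g3 a) := by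
  have hg : (g4 : GG) = g2 * g3 := by decide
  rw [hg, map_mul]; rfl

end Generic
section Generic2
open TensorProduct

variable {K : Type*} [Field K] {B : Type*} [CommRing B] [Algebra K B]

private theorem tw_lemmas (ζ : K) (ρ : GG →* (B →ₐ[K] B)) (θ : GG → GG → K) (x Y : B)
    (hζ : ζ ^ 4 = 1) (h2 : (2:K) ≠ 0)
    (hθr : ∀ g h h' : GG, θ g (h * h') = θ g h * θ g h')
    (hθl : ∀ g g' h : GG, θ (g * g') h = θ g h * θ g' h)
    (hθ22 : θ g2 g2 = ζ ^ 2) (hθ23 : θ g2 g3 = -1)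
    (hθ32 : θ g3 g2 = -1) (hθ33 : θ g3 g3 = 1)
    (hρ2x : ρ g2 x = x ^ 3) (hρ2y : ρ g2 Y = x ^ 3 * Y)
    (hρ3x : ρ g3 x = x) (hρ3y : ρ g3 Y = x ^ 2 * Y)
    (hx4 : x ^ 4 = 1) :
    (∀ i j k l : ℕ, twMul ρ θ ((x^i) ⊗ₜ[K] (x^j)) ((x^k) ⊗ₜ[K] (x^l))
        = (x^(i+k)) ⊗ₜ[K] (x^(j+l))) ∧
    (∀ i j : ℕ, twMul ρ θ ((x^i) ⊗ₜ[K] (x^j)) (Y ⊗ₜ[K] Y)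
        = (2:K)⁻¹ • ((x^i * Y) ⊗ₜ[K] (x^j * Y) + (x^i * (x^2 * Y)) ⊗ₜ[K] (x^j * Y)
          + (x^i * Y) ⊗ₜ[K] ((x^3)^j * Y) - (x^i * (x^2 * Y)) ⊗ₜ[K] ((x^3)^j * Y))) := by
  have h4 : (4:K) ≠ 0 := by
    have := mul_ne_zero h2 h2
    simpa [show (2:K)*2 = 4 from by norm_num] using this
  obtain ⟨t11, t12, t13, t14, t21, t24, t31, t34, t41, t42, t43, t44⟩ :=
    theta_table ζ θ hθr hθl hθ22 hθ23 hθ32 hθ33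
  have hx5 : x ^ 5 = x := by rw [show x^5 = x^4 * x from by ring, hx4, one_mul]
  have hx9 : x ^ 9 = x := by
    rw [show x^9 = x^4 * (x^4 * x) from by ring, hx4, one_mul, one_mul]
  have hρ1 : ∀ a : B, ρ g1 a = a := rho_one ρ
  have hρ4x : ρ g4 x = x ^ 3 := by rw [rho_four, hρ3x, hρ2x]
  have hρ4y : ρ g4 Y = x * Y := by
    rw [rho_four, hρ3y, map_mul, map_pow, hρ2x, hρ2y,
      show (x^3)^2 * (x^3 * Y) = x^9 * Y from by ring, hx9]
  constructor
  · intro i j k l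
    rw [twMul_tmul, sum_GG]
    rw [sum_GG, sum_GG, sum_GG, sum_GG]
    simp only [map_pow, hρ1, hρ2x, hρ3x, hρ4x, t11, t12, t13, t14, t21,
      hθ22, hθ23, t24, t31, hθ32, hθ33, t34, t41, t42, t43, t44]
    rw [pow_add, pow_add]
    try (match_scalars <;> (try ring; try field_simp; try ring; try (exact Or.inl trivial)))
  · intro i j
    rw [twMul_tmul, sum_GG]
    rw [sum_GG, sum_GG, sum_GG, sum_GG]
    simp only [map_pow, hρ1, hρ2x, hρ3x, hρ4x, hρ2y, hρ3y, hρ4y, t11, t12,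
      t13, t14, t21, hθ22, hθ23, t24, t31, hθ32, hθ33, t34, t41, t42, t43, t44]
    try (match_scalars <;> (try ring; try field_simp; try ring; try (exact Or.inl trivial)))

end Generic2
section Generic3
open TensorProduct

variable {K : Type*} [Field K] {B : Type*} [CommRing B] [Algebra K B]

private theorem delta_values (ζ : K) (ρ : GG →* (B →ₐ[K] B)) (θ : GG → GG → K) (x Y : B)
    (hζ : ζ ^ 4 = 1) (h2 : (2:K) ≠ 0)
    (hθr : ∀ g h h' : GG, θ g (h * h') = θ g h * θ g h')
    (hθl : ∀ g g' h : GG, θ (g * g') h = θ g h * θ g' h)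
    (hθ22 : θ g2 g2 = ζ ^ 2) (hθ23 : θ g2 g3 = -1)
    (hθ32 : θ g3 g2 = -1) (hθ33 : θ g3 g3 = 1)
    (hρ2x : ρ g2 x = x ^ 3) (hρ2y : ρ g2 Y = x ^ 3 * Y)
    (hρ3x : ρ g3 x = x) (hρ3y : ρ g3 Y = x ^ 2 * Y)
    (hx4 : x ^ 4 = 1)
    (Δ : B →ₗ[K] B ⊗[K] B)
    (hΔm : ∀ a b : B, Δ (a * b) = twMul ρ θ (Δ a) (Δ b))
    (hΔx : Δ x = (2 : K)⁻¹ •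
      (x ⊗ₜ[K] x + x ⊗ₜ[K] (x ^ 3) + (x ^ 3) ⊗ₜ[K] x - (x ^ 3) ⊗ₜ[K] (x ^ 3)))
    (hΔy : Δ Y = Y ⊗ₜ[K] Y) :
    Δ (x^2) = (x^2) ⊗ₜ[K] (x^2) ∧
    (Δ (x^3) = (2:K)⁻¹ • ((x^3) ⊗ₜ[K] (x^3) + (x^3) ⊗ₜ[K] x
      + x ⊗ₜ[K] (x^3) - x ⊗ₜ[K] x)) ∧
    Δ (x*Y) = (x*Y) ⊗ₜ[K] (x*Y) ∧
    Δ (x^2*Y) = (x^2*Y) ⊗ₜ[K] (x^2*Y) ∧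
    Δ (x^3*Y) = (x^3*Y) ⊗ₜ[K] (x^3*Y) := by
  obtain ⟨tw_even, tw_y⟩ := tw_lemmas ζ ρ θ x Y hζ h2 hθr hθl hθ22 hθ23 hθ32 hθ33
    hρ2x hρ2y hρ3x hρ3y hx4
  have hx5 : x ^ 5 = x := by rw [show x^5 = x^4 * x from by ring, hx4, one_mul]
  have hx6 : x ^ 6 = x ^ 2 := by rw [show x^6 = x^4 * x^2 from by ring, hx4, one_mul]
  have hx9 : x ^ 9 = x := by
    rw [show x^9 = x^4 * (x^4 * x) from by ring, hx4, one_mul, one_mul]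
  have hΔxp : Δ x = (2:K)⁻¹ • ((x^1) ⊗ₜ[K] (x^1) + (x^1) ⊗ₜ[K] (x^3)
      + (x^3) ⊗ₜ[K] (x^1) - (x^3) ⊗ₜ[K] (x^3)) := by
    rw [hΔx]; simp only [pow_one]
  have tw_y11 : twMul ρ θ (x ⊗ₜ[K] x) (Y ⊗ₜ[K] Y)
      = (2:K)⁻¹ • ((x*Y) ⊗ₜ[K] (x*Y) + (x^3*Y) ⊗ₜ[K] (x*Y)
        + (x*Y) ⊗ₜ[K] (x^3*Y) - (x^3*Y) ⊗ₜ[K] (x^3*Y)) := by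
    have h := tw_y 1 1
    simp only [pow_one] at h
    rw [h, show x*(x^2*Y) = x^3*Y from by ring]
  have tw_y13 : twMul ρ θ (x ⊗ₜ[K] (x^3)) (Y ⊗ₜ[K] Y)
      = (2:K)⁻¹ • ((x*Y) ⊗ₜ[K] (x^3*Y) + (x^3*Y) ⊗ₜ[K] (x^3*Y)
        + (x*Y) ⊗ₜ[K] (x*Y) - (x^3*Y) ⊗ₜ[K] (x*Y)) := by
    have h := tw_y 1 3
    simp only [pow_one] at h
    rw [h, show x*(x^2*Y) = x^3*Y from by ring,
      show ((x^3)^3 : B) = x^9 from by ring, hx9]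
  have tw_y31 : twMul ρ θ ((x^3) ⊗ₜ[K] x) (Y ⊗ₜ[K] Y)
      = (2:K)⁻¹ • ((x^3*Y) ⊗ₜ[K] (x*Y) + (x*Y) ⊗ₜ[K] (x*Y)
        + (x^3*Y) ⊗ₜ[K] (x^3*Y) - (x*Y) ⊗ₜ[K] (x^3*Y)) := by
    have h := tw_y 3 1
    simp only [pow_one] at h
    rw [h, show x^3*(x^2*Y) = x^5*Y from by ring, hx5]
  have tw_y33 : twMul ρ θ ((x^3) ⊗ₜ[K] (x^3)) (Y ⊗ₜ[K] Y)
      = (2:K)⁻¹ • ((x^3*Y) ⊗ₜ[K] (x^3*Y) + (x*Y) ⊗ₜ[K] (x^3*Y)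
        + (x^3*Y) ⊗ₜ[K] (x*Y) - (x*Y) ⊗ₜ[K] (x*Y)) := by
    have h := tw_y 3 3
    rw [h, show x^3*(x^2*Y) = x^5*Y from by ring, hx5,
      show ((x^3)^3 : B) = x^9 from by ring, hx9]
  have hΔx2 : Δ (x^2) = (x^2) ⊗ₜ[K] (x^2) := by
    have h : Δ (x * x) = (x^2) ⊗ₜ[K] (x^2) := by
      rw [hΔm, hΔxp]
      rw [twMul_smul_left, twMul_smul_right]
      simp only [twMul_add_left, twMul_add_right, twMul_sub_left, twMul_sub_right,
        tw_even, Nat.reduceAdd, hx4, hx6]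
      try (match_scalars <;> (try ring; try field_simp; try ring; try (exact Or.inl trivial)))
    rw [← h, pow_two]
  have hΔx3 : Δ (x^3) = (2:K)⁻¹ • ((x^3) ⊗ₜ[K] (x^3) + (x^3) ⊗ₜ[K] x
      + x ⊗ₜ[K] (x^3) - x ⊗ₜ[K] x) := by
    have h : Δ (x^2 * x) = (2:K)⁻¹ • ((x^3) ⊗ₜ[K] (x^3) + (x^3) ⊗ₜ[K] x
        + x ⊗ₜ[K] (x^3) - x ⊗ₜ[K] x) := by
      rw [hΔm, hΔx2, hΔxp]
      rw [twMul_smul_right]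
      simp only [twMul_add_right, twMul_sub_right, tw_even, Nat.reduceAdd, hx5]
      try (match_scalars <;> (try ring; try field_simp; try ring; try (exact Or.inl trivial)))
    rw [← h, ← pow_succ]
  have hΔe4 : Δ (x*Y) = (x*Y) ⊗ₜ[K] (x*Y) := by
    rw [hΔm, hΔx, hΔy]
    rw [twMul_smul_left]
    simp only [twMul_add_left, twMul_sub_left]
    rw [tw_y11, tw_y13, tw_y31, tw_y33]
    try (match_scalars <;> (try ring; try field_simp; try ring; try (exact Or.inl trivial)))
  have hΔe3 : Δ (x^2*Y) = (x^2*Y) ⊗ₜ[K] (x^2*Y) := by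
    rw [hΔm, hΔx2, hΔy]
    have h := tw_y 2 2
    rw [h, show x^2*(x^2*Y) = x^4*Y from by ring, hx4, one_mul,
      show ((x^3)^2 : B) = x^6 from by ring, hx6]
    try (match_scalars <;> (try ring; try field_simp; try ring; try (exact Or.inl trivial)))
  have hΔe2 : Δ (x^3*Y) = (x^3*Y) ⊗ₜ[K] (x^3*Y) := by
    rw [hΔm, hΔx3, hΔy]
    rw [twMul_smul_left]
    simp only [twMul_add_left, twMul_sub_left]
    rw [tw_y33, tw_y31, tw_y13, tw_y11]
    try (match_scalars <;> (try ring; try field_simp; try ring; try (exact Or.inl trivial)))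
  exact ⟨hΔx2, hΔx3, hΔe4, hΔe3, hΔe2⟩

end Generic3
section Generic4

variable {K : Type*} [Field K] {B : Type*} [CommRing B] [Algebra K B]

private theorem yy_combs (ζ : K) (x Y : B) (hx4 : x ^ 4 = 1)
    (hyy : Y * Y = (2:K)⁻¹ • (1 + ζ • x + x^2 - ζ • x^3)) :
    x*(Y*Y) = (2:K)⁻¹ • (x + ζ • (x^2) + x^3 - ζ • (1:B)) ∧
    x^2*(Y*Y) = (2:K)⁻¹ • ((x^2) + ζ • (x^3) + 1 - ζ • x) ∧
    x^3*(Y*Y) = (2:K)⁻¹ • ((x^3) + ζ • (1:B) + x - ζ • (x^2)) := by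
  have hx5 : x ^ 5 = x := by rw [show x^5 = x^4 * x from by ring, hx4, one_mul]
  have hx6 : x ^ 6 = x ^ 2 := by rw [show x^6 = x^4 * x^2 from by ring, hx4, one_mul]
  refine ⟨?_, ?_, ?_⟩
  · rw [hyy, mul_smul_comm]
    simp only [mul_add, mul_sub, mul_smul_comm, mul_one,
      show x*x = x^2 from by ring, show x*x^2 = x^3 from by ring,
      show x*x^3 = 1 from by rw [show x*x^3 = x^4 from by ring, hx4]]
    try module
  · rw [hyy, mul_smul_comm]
    simp only [mul_add, mul_sub, mul_smul_comm, mul_one,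
      show x^2*x = x^3 from by ring,
      show x^2*x^2 = 1 from by rw [show x^2*x^2 = x^4 from by ring, hx4],
      show x^2*x^3 = x from by rw [show x^2*x^3 = x^5 from by ring, hx5]]
    try module
  · rw [hyy, mul_smul_comm]
    simp only [mul_add, mul_sub, mul_smul_comm, mul_one,
      show x^3*x = 1 from by rw [show x^3*x = x^4 from by ring, hx4],
      show x^3*x^2 = x from by rw [show x^3*x^2 = x^5 from by ring, hx5],
      show x^3*x^3 = x^2 from by rw [show x^3*x^3 = x^6 from by ring, hx6]]
    try module

private theorem key_products (ζ : K) (x Y : B)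
    (hζ : ζ ^ 4 = 1) (h2 : (2:K) ≠ 0) (hζ0 : ζ ≠ 0) (hx4 : x ^ 4 = 1)
    (hyy : Y * Y = (2:K)⁻¹ • (1 + ζ • x + x^2 - ζ • x^3))
    (S : B →ₗ[K] B)
    (hSy : S Y = (2:K)⁻¹ • (Y + ζ⁻¹ • (x^3*Y) + x^2*Y - ζ⁻¹ • (x*Y)))
    (hSy2 : S (x^3*Y) = (2:K)⁻¹ • (ζ⁻¹ • Y + x^3*Y - ζ⁻¹ • (x^2*Y) + x*Y))
    (hSy3 : S (x^2*Y) = (2:K)⁻¹ • (Y - ζ⁻¹ • (x^3*Y) + x^2*Y + ζ⁻¹ • (x*Y)))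
    (hSy4 : S (x*Y) = (2:K)⁻¹ • (-(ζ⁻¹ • Y) + x^3*Y + ζ⁻¹ • (x^2*Y) + x*Y)) :
    S Y * Y = 1 ∧ S (x*Y) * (x*Y) = 1 ∧ S (x^2*Y) * (x^2*Y) = 1 ∧
      S (x^3*Y) * (x^3*Y) = 1 := by
  have hx5 : x ^ 5 = x := by rw [show x^5 = x^4 * x from by ring, hx4, one_mul]
  have hx6 : x ^ 6 = x ^ 2 := by rw [show x^6 = x^4 * x^2 from by ring, hx4, one_mul]
  obtain ⟨hyc1, hyc2, hyc3⟩ := yy_combs ζ x Y hx4 hyy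
  refine ⟨?_, ?_, ?_, ?_⟩
  · rw [hSy, smul_mul_assoc]
    simp only [add_mul, sub_mul, smul_mul_assoc]
    rw [show (x^3*Y)*Y = x^3*(Y*Y) from by ring, show (x^2*Y)*Y = x^2*(Y*Y) from by ring,
      show (x*Y)*Y = x*(Y*Y) from by ring, hyc1, hyc2, hyc3, hyy]
    match_scalars <;> (try ring; try field_simp; try ring; try (exact Or.inl trivial))
  · rw [hSy4, smul_mul_assoc]
    simp only [add_mul, sub_mul, neg_mul, smul_mul_assoc]
    rw [show Y*(x*Y) = x*(Y*Y) from by ring,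
      show (x^3*Y)*(x*Y) = x^4*(Y*Y) from by ring, hx4, one_mul,
      show (x^2*Y)*(x*Y) = x^3*(Y*Y) from by ring,
      show (x*Y)*(x*Y) = x^2*(Y*Y) from by ring,
      hyc1, hyc2, hyc3, hyy]
    match_scalars <;> (try ring; try field_simp; try ring; try (exact Or.inl trivial))
  · rw [hSy3, smul_mul_assoc]
    simp only [add_mul, sub_mul, smul_mul_assoc]
    rw [show Y*(x^2*Y) = x^2*(Y*Y) from by ring,
      show (x^3*Y)*(x^2*Y) = x^5*(Y*Y) from by ring, hx5,
      show (x^2*Y)*(x^2*Y) = x^4*(Y*Y) from by ring, hx4, one_mul,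
      show (x*Y)*(x^2*Y) = x^3*(Y*Y) from by ring,
      hyc1, hyc2, hyc3, hyy]
    match_scalars <;> (try ring; try field_simp; try ring; try (exact Or.inl trivial))
  · rw [hSy2, smul_mul_assoc]
    simp only [add_mul, sub_mul, smul_mul_assoc]
    rw [show Y*(x^3*Y) = x^3*(Y*Y) from by ring,
      show (x^3*Y)*(x^3*Y) = x^6*(Y*Y) from by ring, hx6,
      show (x^2*Y)*(x^3*Y) = x^5*(Y*Y) from by ring, hx5,
      show (x*Y)*(x^3*Y) = x^4*(Y*Y) from by ring, hx4, one_mul,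
      hyc1, hyc2, hyc3, hyy]
    match_scalars <;> (try ring; try field_simp; try ring; try (exact Or.inl trivial))

end Generic4
section FirstAlgFacts

private theorem falg_smul {K : Type*} [Field K] (ζ : K) (r : K) (a : FirstAlg K ζ) :
    r • a = Ideal.Quotient.mk (firstRelIdeal K ζ) (C r) * a := by
  rw [Algebra.smul_def (A := FirstAlg K ζ) r a]; rfl

private theorem falg_x4 {K : Type*} [Field K] (ζ : K) : xF K ζ ^ 4 = 1 := by
  have h0 : (Ideal.Quotient.mk (firstRelIdeal K ζ)) (X 0 ^ 4 - 1) = 0 :=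
    Ideal.Quotient.eq_zero_iff_mem.mpr (Ideal.subset_span (by simp))
  rw [map_sub, map_pow, map_one, sub_eq_zero] at h0
  exact h0

private theorem falg_yy {K : Type*} [Field K] (ζ : K) :
    yF K ζ * yF K ζ
      = (2:K)⁻¹ • (1 + ζ • xF K ζ + xF K ζ ^ 2 - ζ • xF K ζ ^ 3) := by
  have h0 : (Ideal.Quotient.mk (firstRelIdeal K ζ))
      (X 1 ^ 2 - C ((2:K)⁻¹) * (1 + C ζ * X 0 + X 0 ^ 2 - C ζ * X 0 ^ 3)) = 0 :=
    Ideal.Quotient.eq_zero_iff_mem.mpr (Ideal.subset_span (by simp))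
  rw [map_sub, sub_eq_zero] at h0
  simp only [map_pow, map_mul, map_add, map_sub, map_one] at h0
  have h1 : yF K ζ * yF K ζ = yF K ζ ^ 2 := (pow_two _).symm
  rw [h1, falg_smul, falg_smul, falg_smul]
  exact h0

set_option maxHeartbeats 1000000 in
set_option synthInstance.maxHeartbeats 400000 in
private theorem falg_span {K : Type*} [Field K] (ζ : K) (h2 : (2:K) ≠ 0) :
    ∀ a : FirstAlg K ζ, a ∈ Submodule.span K
      ({1, xF K ζ, xF K ζ^2, xF K ζ^3, yF K ζ, xF K ζ * yF K ζ,
        xF K ζ^2 * yF K ζ, xF K ζ^3 * yF K ζ} : Set (FirstAlg K ζ)) := by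
  set x := xF K ζ with hxdef
  set Y := yF K ζ with hydef
  have hx4 : x ^ 4 = 1 := falg_x4 ζ
  have hyy : Y * Y = (2:K)⁻¹ • (1 + ζ • x + x^2 - ζ • x^3) := falg_yy ζ
  obtain ⟨hyc1, hyc2, hyc3⟩ := yy_combs ζ x Y hx4 hyy
  set M := Submodule.span K ({1, x, x^2, x^3, Y, x*Y, x^2*Y, x^3*Y} :
      Set (FirstAlg K ζ)) with hMdef
  have hb : ∀ v ∈ ({1, x, x^2, x^3, Y, x*Y, x^2*Y, x^3*Y} :
      Set (FirstAlg K ζ)), v ∈ M := fun v hv => Submodule.subset_span hv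
  have hb1 : (1:FirstAlg K ζ) ∈ M := hb _ (by left; rfl)
  have hb2 : x ∈ M := hb _ (by right; left; rfl)
  have hb3 : x^2 ∈ M := hb _ (by right; right; left; rfl)
  have hb4 : x^3 ∈ M := hb _ (by right; right; right; left; rfl)
  have hb5 : Y ∈ M := hb _ (by right; right; right; right; left; rfl)
  have hb6 : x*Y ∈ M := hb _ (by right; right; right; right; right; left; rfl)
  have hb7 : x^2*Y ∈ M := hb _
    (by right; right; right; right; right; right; left; rfl)
  have hb8 : x^3*Y ∈ M := hb _
    (by right; right; right; right; right; right; right; rfl)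
  have hmulx : ∀ b ∈ M, b * x ∈ M := by
    intro b hbm
    induction hbm using Submodule.span_induction with
    | mem v hv =>
      simp only [Set.mem_insert_iff, Set.mem_singleton_iff] at hv
      rcases hv with rfl|rfl|rfl|rfl|rfl|rfl|rfl|rfl
      · rw [one_mul]; exact hb2
      · rw [show x*x = x^2 from by ring]; exact hb3
      · rw [show x^2*x = x^3 from by ring]; exact hb4
      · rw [show x^3*x = x^4 from by ring, hx4]; exact hb1
      · rw [mul_comm]; exact hb6
      · rw [show (x*Y)*x = x^2*Y from by ring]; exact hb7
      · rw [show (x^2*Y)*x = x^3*Y from by ring]; exact hb8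
      · rw [show (x^3*Y)*x = x^4*Y from by ring, hx4, one_mul]; exact hb5
    | zero => rw [zero_mul]; exact Submodule.zero_mem _
    | add u v hu hv ihu ihv => rw [add_mul]; exact Submodule.add_mem _ ihu ihv
    | smul r u hu ihu => rw [smul_mul_assoc]; exact Submodule.smul_mem _ _ ihu
  have hmuly : ∀ b ∈ M, b * Y ∈ M := by
    intro b hbm
    induction hbm using Submodule.span_induction with
    | mem v hv =>
      simp only [Set.mem_insert_iff, Set.mem_singleton_iff] at hv
      rcases hv with rfl|rfl|rfl|rfl|rfl|rfl|rfl|rfl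
      · rw [one_mul]; exact hb5
      · exact hb6
      · exact hb7
      · exact hb8
      · rw [hyy]
        exact Submodule.smul_mem _ _ (Submodule.sub_mem _ (Submodule.add_mem _
          (Submodule.add_mem _ hb1 (Submodule.smul_mem _ _ hb2)) hb3)
          (Submodule.smul_mem _ _ hb4))
      · rw [show (x*Y)*Y = x*(Y*Y) from by ring, hyc1]
        exact Submodule.smul_mem _ _ (Submodule.sub_mem _ (Submodule.add_mem _
          (Submodule.add_mem _ hb2 (Submodule.smul_mem _ _ hb3)) hb4)
          (Submodule.smul_mem _ _ hb1))
      · rw [show (x^2*Y)*Y = x^2*(Y*Y) from by ring, hyc2]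
        exact Submodule.smul_mem _ _ (Submodule.sub_mem _ (Submodule.add_mem _
          (Submodule.add_mem _ hb3 (Submodule.smul_mem _ _ hb4)) hb1)
          (Submodule.smul_mem _ _ hb2))
      · rw [show (x^3*Y)*Y = x^3*(Y*Y) from by ring, hyc3]
        exact Submodule.smul_mem _ _ (Submodule.sub_mem _ (Submodule.add_mem _
          (Submodule.add_mem _ hb4 (Submodule.smul_mem _ _ hb1)) hb2)
          (Submodule.smul_mem _ _ hb3))
    | zero => rw [zero_mul]; exact Submodule.zero_mem _
    | add u v hu hv ihu ihv => rw [add_mul]; exact Submodule.add_mem _ ihu ihv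
    | smul r u hu ihu => rw [smul_mul_assoc]; exact Submodule.smul_mem _ _ ihu
  intro a
  obtain ⟨p, rfl⟩ := Ideal.Quotient.mk_surjective a
  induction p using MvPolynomial.induction_on with
  | C r =>
    rw [show (Ideal.Quotient.mk (firstRelIdeal K ζ)) (C r)
      = r • (1:FirstAlg K ζ) from by rw [falg_smul ζ r 1, mul_one]]
    exact Submodule.smul_mem _ _ hb1
  | add p q hp hq =>
    simp only [map_add]; exact Submodule.add_mem _ hp hq
  | mul_X p n hp =>
    rw [map_mul]
    fin_cases n
    · exact hmulx _ hp
    · exact hmuly _ hp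

end FirstAlgFacts
set_option maxHeartbeats 1000000 in
set_option synthInstance.maxHeartbeats 400000 in
theorem stmt_10 {K : Type*} [Field K] (ξ : K) (hξ : IsPrimitiveRoot ξ 8)
    (ζ : K) (hζ : ζ ^ 4 = 1)
    (ρ : GG →* (FirstAlg K ζ →ₐ[K] FirstAlg K ζ))
    (hρ2x : ρ g2 (xF K ζ) = xF K ζ ^ 3) (hρ2y : ρ g2 (yF K ζ) = xF K ζ ^ 3 * yF K ζ)
    (hρ3x : ρ g3 (xF K ζ) = xF K ζ) (hρ3y : ρ g3 (yF K ζ) = xF K ζ ^ 2 * yF K ζ)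
    (θ : GG → GG → K)
    (hθr : ∀ g h h' : GG, θ g (h * h') = θ g h * θ g h')
    (hθl : ∀ g g' h : GG, θ (g * g') h = θ g h * θ g' h)
    (hθ22 : θ g2 g2 = ζ ^ 2) (hθ23 : θ g2 g3 = -1)
    (hθ32 : θ g3 g2 = -1) (hθ33 : θ g3 g3 = 1)
    -- the coproduct `Δ : A → A ⊗̂ A`
    (Δ : FirstAlg K ζ →ₗ[K] FirstAlg K ζ ⊗[K] FirstAlg K ζ)
    (hΔ1 : Δ 1 = (1 : FirstAlg K ζ) ⊗ₜ[K] (1 : FirstAlg K ζ))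
    (hΔm : ∀ a b : FirstAlg K ζ, Δ (a * b) = twMul ρ θ (Δ a) (Δ b))
    (hΔx : Δ (xF K ζ) = (2 : K)⁻¹ •
      ((xF K ζ) ⊗ₜ[K] (xF K ζ) + (xF K ζ) ⊗ₜ[K] (xF K ζ ^ 3) +
        (xF K ζ ^ 3) ⊗ₜ[K] (xF K ζ) - (xF K ζ ^ 3) ⊗ₜ[K] (xF K ζ ^ 3)))
    (hΔy : Δ (yF K ζ) = (yF K ζ) ⊗ₜ[K] (yF K ζ))
    -- the counit `ε : A → K` with `ε(x) = ε(y) = 1`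
    (ε : FirstAlg K ζ →ₐ[K] K)
    (hεx : ε (xF K ζ) = 1) (hεy : ε (yF K ζ) = 1)
    -- the antipode `S`, given on the basis of group-like elements
    (S : FirstAlg K ζ →ₗ[K] FirstAlg K ζ)
    (hSw1 : S (w1F K ζ) = w1F K ζ) (hSw2 : S (w2F K ξ ζ) = w2F K ξ ζ)
    (hSw3 : S (w3F K ξ ζ) = w3F K ξ ζ) (hSw4 : S (w4F K ζ) = w4F K ζ)
    (hSe1 : S (e1F K ζ) = (2 : K)⁻¹ •
      (e1F K ζ + ζ⁻¹ • e2F K ζ + e3F K ζ - ζ⁻¹ • e4F K ζ))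
    (hSe2 : S (e2F K ζ) = (2 : K)⁻¹ •
      (ζ⁻¹ • e1F K ζ + e2F K ζ - ζ⁻¹ • e3F K ζ + e4F K ζ))
    (hSe3 : S (e3F K ζ) = (2 : K)⁻¹ •
      (e1F K ζ - ζ⁻¹ • e2F K ζ + e3F K ζ + ζ⁻¹ • e4F K ζ))
    (hSe4 : S (e4F K ζ) = (2 : K)⁻¹ •
      (-(ζ⁻¹ • e1F K ζ) + e2F K ζ + ζ⁻¹ • e3F K ζ + e4F K ζ)) :
    -- `S` is an antipode: `∑ S(a₁)a₂ = ε(a)1 = ∑ a₁S(a₂)`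
    ∀ a : FirstAlg K ζ,
      (LinearMap.mul' K (FirstAlg K ζ))
          ((TensorProduct.map S LinearMap.id) (Δ a)) = ε a • (1 : FirstAlg K ζ) ∧
      (LinearMap.mul' K (FirstAlg K ζ))
          ((TensorProduct.map LinearMap.id S) (Δ a)) = ε a • (1 : FirstAlg K ζ) := by

  have h2 : (2:K) ≠ 0 := by
    intro h
    have h4 : ξ ^ 4 ≠ 1 := hξ.pow_ne_one_of_pos_of_lt (by norm_num) (by norm_num)
    have h8 : ξ ^ 8 = 1 := hξ.pow_eq_one
    apply h4
    have hfac : (ξ^4 - 1) * (ξ^4 + 1) = 0 := by linear_combination h8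
    rcases mul_eq_zero.mp hfac with h' | h'
    · linear_combination h'
    · linear_combination h' - h
  have hζ0 : ζ ≠ 0 := by intro h; rw [h] at hζ; norm_num at hζ
  have hξ0 : ξ ≠ 0 := hξ.ne_zero (by norm_num)
  have hx4 : xF K ζ ^ 4 = 1 := falg_x4 ζ
  have hyy := falg_yy ζ
  simp only [e1F, e2F, e3F, e4F] at hSe1 hSe2 hSe3 hSe4
  obtain ⟨hΔx2, hΔx3, hΔe4, hΔe3, hΔe2⟩ := delta_values ζ ρ θ (xF K ζ) (yF K ζ)
    hζ h2 hθr hθl hθ22 hθ23 hθ32 hθ33 hρ2x hρ2y hρ3x hρ3y hx4 Δ hΔm hΔx hΔy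
  obtain ⟨key1, key4, key3, key2⟩ := key_products ζ (xF K ζ) (yF K ζ)
    hζ h2 hζ0 hx4 hyy S hSe1 hSe2 hSe3 hSe4
  -- S fixes the powers of x
  have hS1 : S 1 = 1 := hSw1
  have hu : (ξ^2*ζ^2 : K) ≠ 0 := mul_ne_zero (pow_ne_zero _ hξ0) (pow_ne_zero _ hζ0)
  have hxcomb : xF K ζ = ((2:K)⁻¹*(1+(ξ^2*ζ^2)⁻¹)) • w2F K ξ ζ
      + ((2:K)⁻¹*(1-(ξ^2*ζ^2)⁻¹)) • w3F K ξ ζ := by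
    simp only [w2F, w3F]
    match_scalars <;> (field_simp; ring)
  have hx3comb : xF K ζ ^ 3 = ((2:K)⁻¹*(1-(ξ^2*ζ^2)⁻¹)) • w2F K ξ ζ
      + ((2:K)⁻¹*(1+(ξ^2*ζ^2)⁻¹)) • w3F K ξ ζ := by
    simp only [w2F, w3F]
    match_scalars <;> (field_simp; ring)
  have hSx : S (xF K ζ) = xF K ζ := by
    rw [hxcomb, map_add, map_smul, map_smul, hSw2, hSw3]
  have hSx3 : S (xF K ζ ^ 3) = xF K ζ ^ 3 := by
    rw [hx3comb, map_add, map_smul, map_smul, hSw2, hSw3]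
  have hSx2 : S (xF K ζ ^ 2) = xF K ζ ^ 2 := hSw4
  -- counit values
  have hεx2 : ε (xF K ζ ^ 2) = 1 := by rw [map_pow, hεx, one_pow]
  have hεx3 : ε (xF K ζ ^ 3) = 1 := by rw [map_pow, hεx, one_pow]
  have hεe4 : ε (xF K ζ * yF K ζ) = 1 := by rw [map_mul, hεx, hεy, one_mul]
  have hεe3 : ε (xF K ζ ^ 2 * yF K ζ) = 1 := by rw [map_mul, hεx2, hεy, one_mul]
  have hεe2 : ε (xF K ζ ^ 3 * yF K ζ) = 1 := by rw [map_mul, hεx3, hεy, one_mul]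
  -- power product reductions
  have m_xx : xF K ζ * xF K ζ = xF K ζ ^ 2 := (pow_two _).symm
  have m_xx3 : xF K ζ * xF K ζ ^ 3 = 1 := by
    rw [show xF K ζ * xF K ζ^3 = xF K ζ^4 from by ring, hx4]
  have m_x3x : xF K ζ ^ 3 * xF K ζ = 1 := by
    rw [show xF K ζ^3 * xF K ζ = xF K ζ^4 from by ring, hx4]
  have m_x3x3 : xF K ζ ^ 3 * xF K ζ ^ 3 = xF K ζ ^ 2 := by
    rw [show xF K ζ^3 * xF K ζ^3 = xF K ζ^4 * xF K ζ^2 from by ring, hx4, one_mul]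
  have m_x2x2 : xF K ζ ^ 2 * xF K ζ ^ 2 = 1 := by
    rw [show xF K ζ^2 * xF K ζ^2 = xF K ζ^4 from by ring, hx4]
  -- main induction
  intro a
  have ha := falg_span ζ h2 a
  induction ha using Submodule.span_induction with
  | mem v hv =>
    simp only [Set.mem_insert_iff, Set.mem_singleton_iff] at hv
    rcases hv with rfl|rfl|rfl|rfl|rfl|rfl|rfl|rfl
    · constructor <;>
      · rw [hΔ1]
        simp only [TensorProduct.map_tmul, LinearMap.mul'_apply, LinearMap.id_coe,
          id_eq, hS1, map_one, one_smul, mul_one]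
    · constructor <;>
      · rw [hΔx]
        simp only [map_smul, map_add, map_sub, TensorProduct.map_tmul,
          LinearMap.mul'_apply, LinearMap.id_coe, id_eq, hSx, hSx3, hεx, one_smul]
        rw [m_xx, m_xx3, m_x3x, m_x3x3]
        match_scalars <;> (try field_simp; try ring)
    · constructor <;>
      · rw [hΔx2]
        simp only [TensorProduct.map_tmul, LinearMap.mul'_apply, LinearMap.id_coe,
          id_eq, hSx2, hεx2, one_smul]
        rw [m_x2x2]
    · constructor <;>
      · rw [hΔx3]
        simp only [map_smul, map_add, map_sub, TensorProduct.map_tmul,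
          LinearMap.mul'_apply, LinearMap.id_coe, id_eq, hSx, hSx3, hεx3, one_smul]
        rw [m_xx, m_xx3, m_x3x, m_x3x3]
        match_scalars <;> (try field_simp; try ring)
    · refine ⟨?_, ?_⟩ <;>
      · rw [hΔy]
        simp only [TensorProduct.map_tmul, LinearMap.mul'_apply, LinearMap.id_coe,
          id_eq, hεy, one_smul]
        first
          | exact key1
          | (rw [mul_comm]; exact key1)
    · refine ⟨?_, ?_⟩ <;>
      · rw [hΔe4]
        simp only [TensorProduct.map_tmul, LinearMap.mul'_apply, LinearMap.id_coe,
          id_eq, hεe4, one_smul]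
        first
          | exact key4
          | (rw [mul_comm]; exact key4)
    · refine ⟨?_, ?_⟩ <;>
      · rw [hΔe3]
        simp only [TensorProduct.map_tmul, LinearMap.mul'_apply, LinearMap.id_coe,
          id_eq, hεe3, one_smul]
        first
          | exact key3
          | (rw [mul_comm]; exact key3)
    · refine ⟨?_, ?_⟩ <;>
      · rw [hΔe2]
        simp only [TensorProduct.map_tmul, LinearMap.mul'_apply, LinearMap.id_coe,
          id_eq, hεe2, one_smul]
        first
          | exact key2
          | (rw [mul_comm]; exact key2)
  | zero =>
    constructor <;> simp
  | add u v hu hv ihu ihv =>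
    constructor
    · rw [map_add, map_add, map_add, ihu.1, ihv.1, map_add, add_smul]
    · rw [map_add, map_add, map_add, ihu.2, ihv.2, map_add, add_smul]
  | smul r u hu ihu =>
    constructor
    · rw [map_smul, map_smul, map_smul, ihu.1, map_smul, smul_assoc]
    · rw [map_smul, map_smul, map_smul, ihu.2, map_smul, smul_assoc]
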